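/- arXiv:math/0104017 — 5 statements merged into one kernel-verified Lean document; each statement's English description precedes it below -/
import Mathlib

section
/- Let p be an odd prime. Let L be a finitely generated ℤ-module whose torsion submodule is finite of order coprime to p, and let b be a symmetric ℤ-bilinear form on L (such a form necessarily vanishes on torsion elements) whose induced form on the free quotient L/torsion is unimodular. Let N ⊆ L be a submodule of finite index in L, with this index coprime to p. If D ∈ L satisfies p ∣ b(D, n) for every n ∈ N, then D is p-divisible in L, i.e. D = p • E for some E ∈ L. -/
/-- Lemma 3.3 of the paper: let `p` be an odd prime, `L` a finitely generated
`ℤ`-module whose torsion submodule is finite of order coprime to `p`, and `b` a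
symmetric bilinear form on `L` whose induced form `bbar` on the free quotient
`L ⧸ torsion` is unimodular. If `N ⊆ L` has finite index coprime to `p` and
`D ∈ L` pairs with every element of `N` into a multiple of `p`, then `D` is
`p`-divisible in `L`. -/
theorem stmt_0 (p : ℕ) (hp : p.Prime) (hodd : Odd p)
    (L : Type*) [AddCommGroup L] [Module ℤ L] [Module.Finite ℤ L]
    (htor : Nat.Coprime p (Nat.card (Submodule.torsion ℤ L)))
    (b : L →ₗ[ℤ] L →ₗ[ℤ] ℤ) (hsymm : ∀ x y : L, b x y = b y x)
    (bbar : (L ⧸ Submodule.torsion ℤ L) →ₗ[ℤ] (L ⧸ Submodule.torsion ℤ L) →ₗ[ℤ] ℤ)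
    (hcompat : ∀ x y : L,
      bbar (Submodule.Quotient.mk x) (Submodule.Quotient.mk y) = b x y)
    (hunimod : Function.Bijective
      (bbar : (L ⧸ Submodule.torsion ℤ L) → (L ⧸ Submodule.torsion ℤ L) →ₗ[ℤ] ℤ))
    (N : Submodule ℤ L) (hN : Nat.Coprime p N.toAddSubgroup.index)
    (D : L) (hD : ∀ n ∈ N, (p : ℤ) ∣ b D n) :
    ∃ E : L, D = (p : ℤ) • E := by
  have hp0 : (p : ℤ) ≠ 0 := by exact_mod_cast hp.ne_zero
  -- Step 1: p ∣ b D x for all x ∈ L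
  have hDx : ∀ x : L, (p : ℤ) ∣ b D x := by
    intro x
    have hmem : N.toAddSubgroup.index • x ∈ N := N.toAddSubgroup.nsmul_index_mem x
    have h1 := hD _ hmem
    rw [map_nsmul, nsmul_eq_mul] at h1
    have hcop : IsCoprime (p : ℤ) (N.toAddSubgroup.index : ℤ) :=
      Int.isCoprime_iff_gcd_eq_one.mpr (by exact_mod_cast hN)
    exact hcop.dvd_of_dvd_mul_left h1
  -- Step 2: p ∣ bbar D̄ y for all y in the quotient
  set Q := L ⧸ Submodule.torsion ℤ L with hQ
  set Dbar : Q := Submodule.Quotient.mk D with hDbardef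
  have hDbar : ∀ y : Q, (p : ℤ) ∣ bbar Dbar y := by
    intro y
    obtain ⟨x, rfl⟩ := Submodule.Quotient.mk_surjective _ y
    rw [hcompat]; exact hDx x
  -- Step 3: divide the functional bbar Dbar by p
  have key : ∀ x : Q, (p : ℤ) * (bbar Dbar x / p) = bbar Dbar x :=
    fun x => Int.mul_ediv_cancel' (hDbar x)
  let g : Q →ₗ[ℤ] ℤ :=
    { toFun := fun x => bbar Dbar x / p
      map_add' := by
        intro x y
        have h2 := key (x + y)
        rw [map_add] at h2
        apply mul_left_cancel₀ hp0
        show (p : ℤ) * (bbar Dbar (x + y) / p)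
            = (p : ℤ) * (bbar Dbar x / p + bbar Dbar y / p)
        rw [map_add, h2, mul_add, key x, key y]
      map_smul' := by
        intro c x
        apply mul_left_cancel₀ hp0
        show (p : ℤ) * (bbar Dbar (c • x) / p) = (p : ℤ) * (c • (bbar Dbar x / p))
        rw [key (c • x), map_smul, smul_eq_mul, smul_eq_mul, mul_left_comm, key x] }
  obtain ⟨Ebar, hEbar⟩ := hunimod.2 g
  have heq : bbar Dbar = bbar ((p : ℤ) • Ebar) := by
    rw [map_smul, hEbar]
    ext x
    simp only [LinearMap.smul_apply, smul_eq_mul]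
    exact (key x).symm
  have hdq : Dbar = (p : ℤ) • Ebar := hunimod.1 heq
  -- Step 4: lift and handle torsion
  obtain ⟨E', rfl⟩ := Submodule.Quotient.mk_surjective _ Ebar
  have htormem : D - (p : ℤ) • E' ∈ Submodule.torsion ℤ L := by
    rw [← Submodule.Quotient.mk_eq_zero]
    rw [Submodule.Quotient.mk_sub, Submodule.Quotient.mk_smul]
    rw [← hDbardef, hdq, sub_self]
  -- torsion element is p-divisible
  set t : Submodule.torsion ℤ L := ⟨D - (p : ℤ) • E', htormem⟩ with htdef
  set m : ℕ := Nat.card (Submodule.torsion ℤ L) with hmdef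
  have hmt : (m : ℤ) • t = 0 := by
    rw [natCast_zsmul]; exact card_nsmul_eq_zero'
  have hcop : IsCoprime (p : ℤ) (m : ℤ) :=
    Int.isCoprime_iff_gcd_eq_one.mpr (by exact_mod_cast htor)
  obtain ⟨a, c, hac⟩ := hcop
  have ht : t = (p : ℤ) • (a • t) := by
    have h3 : (a * p + c * m) • t = t := by rw [hac, one_smul]
    rw [add_smul, mul_smul, mul_smul, hmt, smul_zero, add_zero] at h3
    rw [← smul_comm a ((p : ℤ)) t, h3]
  refine ⟨E' + a • (t : L), ?_⟩
  have h4 : (p : ℤ) • (a • (t : L)) = D - (p : ℤ) • E' :=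
    (congrArg Subtype.val ht).symm
  have h5 : (p : ℤ) • (E' + a • (t : L))
      = (p : ℤ) • E' + (p : ℤ) • (a • (t : L)) := by
    simp only [← Int.cast_smul_eq_zsmul ℤ, Int.cast_id]
    exact smul_add _ _ _
  rw [h5, h4]
  abel
end

section
/- Every subset of (ZMod 2)⁴ with at least 12 elements contains an affine hyperplane. -/
/-- An affine hyperplane of the vector space `(ZMod 2)⁴` is a level set
`{x | f x = c}` of a nonzero linear functional `f`. -/
def IsAffineHyperplane (H : Set (Fin 4 → ZMod 2)) : Prop :=
  ∃ (f : (Fin 4 → ZMod 2) →ₗ[ZMod 2] ZMod 2) (c : ZMod 2), f ≠ 0 ∧ H = {x | f x = c}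

/-- Every subset of `(ZMod 2)⁴` with at least 12 elements contains an affine
hyperplane. -/
theorem stmt_4 (S : Set (Fin 4 → ZMod 2)) (hS : 12 ≤ S.ncard) :
    ∃ H : Set (Fin 4 → ZMod 2), IsAffineHyperplane H ∧ H ⊆ S := by
  classical
  have hfr : Module.finrank (ZMod 2) (Fin 4 → ZMod 2) = 4 := by
    simp [Module.finrank_pi]
  set T : Set (Fin 4 → ZMod 2) := Sᶜ with hT
  have hTcard : T.ncard ≤ 4 := by
    have h1 : S.ncard + T.ncard = Nat.card (Fin 4 → ZMod 2) := Set.ncard_add_ncard_compl S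
    have h2 : Nat.card (Fin 4 → ZMod 2) = 16 := by
      simp [Nat.card_eq_fintype_card]
    omega
  rcases Set.eq_empty_or_nonempty T with hTe | ⟨t0, ht0⟩
  · refine ⟨{x | LinearMap.proj (R := ZMod 2) (φ := fun _ : Fin 4 => ZMod 2) 0 x = 0},
      ⟨LinearMap.proj 0, 0, ?_, rfl⟩, ?_⟩
    · intro h
      have := congrFun (congrArg DFunLike.coe h) (fun _ => 1)
      simp at this
    · intro x _
      have : x ∉ T := by simp [hTe]
      simpa [hT] using this
  · set s : Set (Fin 4 → ZMod 2) := (fun t => t - t0) '' (T \ {t0}) with hs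
    have hsfin : s.Finite := (Set.toFinite _)
    have hscard : s.ncard ≤ 3 := by
      have h1 : s.ncard ≤ (T \ {t0}).ncard := Set.ncard_image_le (Set.toFinite _)
      have h2 : (T \ {t0}).ncard ≤ T.ncard - 1 := by
        have := Set.ncard_diff_singleton_of_mem ht0
        omega
      omega
    haveI : Fintype s := hsfin.fintype
    have hlt : Submodule.span (ZMod 2) s < ⊤ := by
      apply span_lt_top_of_card_lt_finrank
      rw [hfr]
      have : s.toFinset.card = s.ncard := by
        rw [Set.ncard_eq_toFinset_card']
      omega
    obtain ⟨f, hf0, hfmap⟩ :=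
      (Submodule.span (ZMod 2) s).exists_dual_map_eq_bot_of_lt_top hlt inferInstance
    have hfvan : ∀ t ∈ T, f t = f t0 := by
      intro t ht
      by_cases h : t = t0
      · rw [h]
      · have hmem : t - t0 ∈ Submodule.span (ZMod 2) s :=
          Submodule.subset_span ⟨t, ⟨ht, h⟩, rfl⟩
        have : f (t - t0) = 0 := by
          have : f (t - t0) ∈ (Submodule.span (ZMod 2) s).map f :=
            ⟨t - t0, hmem, rfl⟩
          rwa [hfmap, Submodule.mem_bot] at this
        have := this
        rw [map_sub] at this
        linear_combination this
    refine ⟨{x | f x = f t0 + 1}, ⟨f, f t0 + 1, hf0, rfl⟩, ?_⟩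
    intro x hx
    by_contra hxS
    have hxT : x ∈ T := hxS
    have h1 : f x = f t0 := hfvan x hxT
    have h2 : f x = f t0 + 1 := hx
    rw [h1] at h2
    have : (1 : ZMod 2) = 0 := by linear_combination -h2
    exact one_ne_zero this
end

section
/- There exists a subset of (ZMod 2)⁴ with exactly 11 elements that contains no affine hyperplane. -/
/-- There is an 11-element subset of `(ZMod 2)⁴` containing no affine hyperplane. -/
theorem stmt_5 :
    ∃ S : Set (Fin 4 → ZMod 2), S.ncard = 11 ∧
      ∀ H : Set (Fin 4 → ZMod 2), IsAffineHyperplane H → ¬ H ⊆ S := by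
  classical
  set T : Finset (Fin 4 → ZMod 2) :=
    {(0 : Fin 4 → ZMod 2), Pi.single 0 1, Pi.single 1 1, Pi.single 2 1, Pi.single 3 1} with hT
  refine ⟨↑(Tᶜ), ?_, ?_⟩
  · rw [Set.ncard_coe_finset]
    decide
  · rintro H ⟨f, c, hf, rfl⟩ hsub
    -- each element of T is not in S, hence not in H
    have hmem : ∀ x ∈ T, f x ≠ c := by
      intro x hx hfx
      have : x ∈ (↑(Tᶜ) : Set (Fin 4 → ZMod 2)) := hsub hfx
      simp [Finset.mem_compl] at this
      exact this hx
    have h0 : (0 : Fin 4 → ZMod 2) ∈ T := by simp [hT]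
    have hc : c = 1 := by
      have := hmem 0 h0
      rw [map_zero] at this
      fin_cases c
      · exact absurd rfl this
      · rfl
    have hsingle : ∀ i : Fin 4, f (Pi.single i 1) = 0 := by
      intro i
      have hi : Pi.single i 1 ∈ T := by fin_cases i <;> simp [hT]
      have := hmem _ hi
      rw [hc] at this
      have h2 := this
      generalize hv : f (Pi.single i 1) = v at h2 ⊢
      fin_cases v
      · rfl
      · exact absurd rfl h2
    apply hf
    ext x
    simpa using hsingle x
end

section
/- There exists a subset of (ZMod 2)⁴ with exactly 12 elements that contains exactly one affine hyperplane. -/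
/-- Our 12-point set: the hyperplane `x 0 = 0` plus four extra points. -/
def mySet : Set (Fin 4 → ZMod 2) :=
  {x | x 0 = 0 ∨ x = ![1,0,0,0] ∨ x = ![1,1,0,0] ∨ x = ![1,0,1,0] ∨ x = ![1,0,0,1]}

lemma key : ∀ (a : Fin 4 → ZMod 2) (c : ZMod 2), a ≠ 0 →
    (∀ x : Fin 4 → ZMod 2, (∑ i, x i * a i) = c →
      (x 0 = 0 ∨ x = ![1,0,0,0] ∨ x = ![1,1,0,0] ∨ x = ![1,0,1,0] ∨ x = ![1,0,0,1])) →
    ∀ x : Fin 4 → ZMod 2, ((∑ i, x i * a i) = c ↔ x 0 = 0) := by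
  decide

lemma card12 : (mySet).ncard = 12 := by
  have : mySet = ↑((Finset.univ : Finset (Fin 4 → ZMod 2)).filter
      (fun x => x 0 = 0 ∨ x = ![1,0,0,0] ∨ x = ![1,1,0,0] ∨ x = ![1,0,1,0] ∨ x = ![1,0,0,1])) := by
    ext x; simp [mySet]
  rw [this, Set.ncard_coe_finset]
  decide

/-- There is a 12-element subset of `(ZMod 2)⁴` containing exactly one affine
hyperplane. -/
theorem stmt_6 :
    ∃ S : Set (Fin 4 → ZMod 2), S.ncard = 12 ∧
      ∃! H : Set (Fin 4 → ZMod 2), IsAffineHyperplane H ∧ H ⊆ S := by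
  refine ⟨mySet, card12, {x | x 0 = 0}, ⟨⟨LinearMap.proj 0, 0, ?_, rfl⟩, fun x hx => Or.inl hx⟩, ?_⟩
  · intro h
    have : (LinearMap.proj 0 : (Fin 4 → ZMod 2) →ₗ[ZMod 2] ZMod 2) ![1,0,0,0] = 0 := by
      rw [h]; rfl
    simp at this
  · rintro H ⟨⟨f, c, hf, rfl⟩, hsub⟩
    set a : Fin 4 → ZMod 2 := fun i => f (fun j => if i = j then 1 else 0) with ha'
    have ha : ∀ x : Fin 4 → ZMod 2, f x = ∑ i, x i * a i := by
      intro x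
      have := LinearMap.pi_apply_eq_sum_univ f x
      simpa [smul_eq_mul, ha'] using this
    have hane : a ≠ 0 := by
      intro h0
      apply hf
      apply LinearMap.ext
      intro x
      rw [ha x, h0]
      simp
    have hsub' : ∀ x : Fin 4 → ZMod 2, (∑ i, x i * a i) = c →
        (x 0 = 0 ∨ x = ![1,0,0,0] ∨ x = ![1,1,0,0] ∨ x = ![1,0,1,0] ∨ x = ![1,0,0,1]) := by
      intro x hx
      have : x ∈ mySet := hsub (by rw [Set.mem_setOf_eq, ha x]; exact hx)
      exact this
    have := key a c hane hsub'
    ext x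
    rw [Set.mem_setOf_eq, Set.mem_setOf_eq, ha x]
    exact this x
end

section
/- Let G be a group having a normal subgroup N such that N is isomorphic to ℤ/3ℤ × ℤ/3ℤ and the quotient G⧸N is isomorphic to ℤ/2ℤ. Then G is isomorphic to one of the following three groups: (ℤ/3 × ℤ/3) × ℤ/2, S₃ × ℤ/3 (S₃ the symmetric group on three letters), or the generalized dihedral group G₁₈ = (ℤ/3 × ℤ/3) ⋊ ℤ/2 in which the nontrivial element of ℤ/2 acts by inversion. -/
/-- Inversion as an automorphism of `ℤ/3 × ℤ/3` (written multiplicatively). -/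
def invAut : MulAut (Multiplicative (ZMod 3 × ZMod 3)) :=
  MulEquiv.inv (Multiplicative (ZMod 3 × ZMod 3))

lemma invAut_sq : invAut * invAut = 1 := by
  refine MulEquiv.ext fun x => ?_
  exact inv_inv x

/-- The action of `ℤ/2` on `ℤ/3 × ℤ/3` in which the nontrivial element acts by
inversion. -/
def invAction : Multiplicative (ZMod 2) →* MulAut (Multiplicative (ZMod 3 × ZMod 3)) :=
  AddMonoidHom.toMultiplicativeLeft
    (ZMod.lift 2 ⟨zmultiplesHom (Additive (MulAut (Multiplicative (ZMod 3 × ZMod 3))))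
        (Additive.ofMul invAut),
      by
        show ((2 : ℤ) • Additive.ofMul invAut) = 0
        rw [two_zsmul, ← ofMul_mul, invAut_sq]
        rfl⟩)

/-- The generalized dihedral group `G₁₈ = (ℤ/3 × ℤ/3) ⋊ ℤ/2`, the nontrivial
element of `ℤ/2` acting by inversion. -/
abbrev G18 : Type :=
  SemidirectProduct (Multiplicative (ZMod 3 × ZMod 3)) (Multiplicative (ZMod 2)) invAction

namespace Stmt10Aux

abbrev M := Multiplicative (ZMod 3 × ZMod 3)
abbrev C2 := Multiplicative (ZMod 2)
abbrev V := ZMod 3 × ZMod 3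

/-- `c ↦ t ^ c.val` as a homomorphism from `C2`, for `t` with `t ^ 2 = 1`. -/
def powHom {G : Type*} [Group G] (t : G) (ht : t ^ 2 = 1) : C2 →* G where
  toFun c := t ^ (Multiplicative.toAdd c).val
  map_one' := pow_zero t
  map_mul' a b := by
    have key : ∀ k : ℕ, t ^ k = t ^ (k % 2) := fun k => by
      conv_lhs => rw [← Nat.div_add_mod k 2]
      rw [pow_add, pow_mul, ht, one_pow, one_mul]
    show t ^ (Multiplicative.toAdd a + Multiplicative.toAdd b).val = _
    rw [ZMod.val_add, ← key, pow_add]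

lemma powHom_zero {G : Type*} [Group G] (t : G) (ht : t ^ 2 = 1) :
    powHom t ht (Multiplicative.ofAdd 0) = 1 := pow_zero t

lemma powHom_one {G : Type*} [Group G] (t : G) (ht : t ^ 2 = 1) :
    powHom t ht (Multiplicative.ofAdd 1) = t := pow_one t

/-- The action `C2 →* MulAut M` sending the generator to an involution `β`. -/
def action (β : MulAut M) (hβ : β * β = 1) : C2 →* MulAut M :=
  powHom β (by rw [pow_two]; exact hβ)

lemma action_zero (β : MulAut M) (hβ : β * β = 1) :
    action β hβ (Multiplicative.ofAdd 0) = 1 := pow_zero β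

lemma action_one (β : MulAut M) (hβ : β * β = 1) :
    action β hβ (Multiplicative.ofAdd 1) = β := pow_one β

lemma c2cases (c : C2) : c = Multiplicative.ofAdd 0 ∨ c = Multiplicative.ofAdd 1 := by
  have : ∀ x : ZMod 2, x = 0 ∨ x = 1 := by decide
  exact this c

/-- Main structure lemma: if `N ≅ M` is normal, `t ∉ N` with `t ^ 2 = 1`, and
conjugation by `t` corresponds to the involution `β` of `M`, then
`G ≅ M ⋊[action β] C2`. -/
noncomputable def structureEquiv {G : Type*} [Group G] (N : Subgroup G) [N.Normal]
    (e : N ≃* M) (j : (G ⧸ N) ≃* C2) (t : G) (ht : t ^ 2 = 1) (htN : t ∉ N)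
    (β : MulAut M) (hβ : β * β = 1)
    (hconj : ∀ m : M, ((e.symm (β m) : N) : G) = t * (e.symm m : N) * t⁻¹) :
    G ≃* SemidirectProduct M C2 (action β hβ) := by
  have htinv : t⁻¹ = t := by
    rw [← mul_one t⁻¹, ← ht, pow_two, ← mul_assoc, inv_mul_cancel, one_mul]
  set f₁ : M →* G := N.subtype.comp e.symm.toMonoidHom with hf₁
  set f₂ : C2 →* G := powHom t ht with hf₂
  have hcompat : ∀ c : C2, f₁.comp ((action β hβ) c).toMonoidHom
      = (MulAut.conj (f₂ c)).toMonoidHom.comp f₁ := by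
    intro c
    rcases c2cases c with hc | hc <;> subst hc <;> ext m
    · simp [action_zero, f₁, f₂, powHom, pow_zero]
    · have : f₂ (Multiplicative.ofAdd 1) = t := powHom_one t ht
      simp only [action_one, this, MonoidHom.comp_apply, MulEquiv.coe_toMonoidHom,
        MulAut.conj_apply]
      simpa [f₁] using hconj (Multiplicative.ofAdd m)
  set Φ : SemidirectProduct M C2 (action β hβ) →* G := SemidirectProduct.lift f₁ f₂ hcompat
    with hΦ
  have hΦapp : ∀ x : SemidirectProduct M C2 (action β hβ),
      Φ x = (e.symm x.left : N) * t ^ (Multiplicative.toAdd x.right).val := fun x => rfl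
  have hsurj : Function.Surjective Φ := by
    intro g
    by_cases hg : g ∈ N
    · exact ⟨⟨e ⟨g, hg⟩, Multiplicative.ofAdd 0⟩, by
        simp [hΦapp, MulEquiv.symm_apply_apply]⟩
    · have hgt : g * t ∈ N := by
        have h2 : ∀ x : C2, x ≠ 1 → ∀ y : C2, y ≠ 1 → x * y = 1 := by decide
        have hqg : j (QuotientGroup.mk g) ≠ 1 := by
          intro h
          exact hg ((QuotientGroup.eq_one_iff g).mp (j.injective (by simpa using h)))
        have hqt : j (QuotientGroup.mk t) ≠ 1 := by
          intro h
          exact htN ((QuotientGroup.eq_one_iff t).mp (j.injective (by simpa using h)))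
        have : j (QuotientGroup.mk (g * t)) = 1 := by
          rw [QuotientGroup.mk_mul, map_mul]
          exact h2 _ hqg _ hqt
        exact (QuotientGroup.eq_one_iff _).mp (j.injective (by simpa using this))
      refine ⟨⟨e ⟨g * t, hgt⟩, Multiplicative.ofAdd 1⟩, ?_⟩
      have : Φ ⟨e ⟨g * t, hgt⟩, Multiplicative.ofAdd 1⟩ = (g * t) * t := by
        simp [hΦapp, MulEquiv.symm_apply_apply, ZMod.val_one, pow_one]
      rw [this, mul_assoc, ← pow_two, ht, mul_one]
  have hfinN : Finite N := Finite.of_equiv _ e.toEquiv.symm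
  have hfinQ : Finite (G ⧸ N) := Finite.of_equiv _ j.toEquiv.symm
  have hfinG : Finite G := by
    exact Finite.of_equiv _ (Subgroup.groupEquivQuotientProdSubgroup (s := N)).symm
  have hprodequiv : SemidirectProduct M C2 (action β hβ) ≃ M × C2 :=
    ⟨fun x => (x.left, x.right), fun p => ⟨p.1, p.2⟩, fun x => rfl, fun p => rfl⟩
  have hcardS : Nat.card (SemidirectProduct M C2 (action β hβ)) = 18 := by
    rw [Nat.card_congr hprodequiv]
    simp [Nat.card_eq_fintype_card]
  have hcardG : Nat.card G = 18 := by
    have h1 : Nat.card N = 9 := by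
      rw [Nat.card_congr e.toEquiv]; simp [Nat.card_eq_fintype_card]
    have h2 : Nat.card (G ⧸ N) = 2 := by
      rw [Nat.card_congr j.toEquiv]; simp [Nat.card_eq_fintype_card]
    rw [Subgroup.card_eq_card_quotient_mul_card_subgroup (s := N), h1, h2]
  have hbij : Function.Bijective Φ := by
    have hfinS : Finite (SemidirectProduct M C2 (action β hβ)) :=
      Finite.of_equiv _ hprodequiv.symm
    have : Nat.card (SemidirectProduct M C2 (action β hβ)) = Nat.card G := by
      rw [hcardS, hcardG]
    exact (Nat.bijective_iff_surjective_and_card Φ).mpr ⟨hsurj, this⟩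
  exact (MulEquiv.ofBijective Φ hbij).symm

/-- Transport a semidirect product along a compatible automorphism of `M`. -/
def semidirectCongr (φ₁ φ₂ : C2 →* MulAut M) (γ : MulAut M)
    (hγ : ∀ (c : C2) (m : M), γ (φ₁ c m) = φ₂ c (γ m)) :
    SemidirectProduct M C2 φ₁ ≃* SemidirectProduct M C2 φ₂ where
  toFun x := ⟨γ x.left, x.right⟩
  invFun x := ⟨γ.symm x.left, x.right⟩
  left_inv x := by cases x; simp
  right_inv x := by cases x; simp
  map_mul' x y := by
    apply SemidirectProduct.ext
    · show γ (x.left * φ₁ x.right y.left) = γ x.left * φ₂ x.right (γ y.left)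
      rw [map_mul, hγ]
    · rfl

/-- Repackage an additive automorphism of `V` as a `MulAut` of `M`. -/
def toMul' (f : V ≃+ V) : MulAut M where
  toFun m := Multiplicative.ofAdd (f (Multiplicative.toAdd m))
  invFun m := Multiplicative.ofAdd (f.symm (Multiplicative.toAdd m))
  left_inv m := by simp
  right_inv m := by simp
  map_mul' a b := congrArg Multiplicative.ofAdd (f.map_add _ _)

/-- Repackage a multiplicative automorphism of `M` as an additive equiv of `V`. -/
def toAdd' (β : MulAut M) : V ≃+ V where
  toFun v := Multiplicative.toAdd (β (Multiplicative.ofAdd v))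
  invFun v := Multiplicative.toAdd (β.symm (Multiplicative.ofAdd v))
  left_inv v := by simp
  right_inv v := by simp
  map_add' a b := congrArg Multiplicative.toAdd
    (map_mul β (Multiplicative.ofAdd a) (Multiplicative.ofAdd b))

/-- The involution `(x, y) ↦ (x, -y)` of `V`. -/
def δadd : V ≃+ V := (AddEquiv.refl (ZMod 3)).prodCongr (AddEquiv.neg (ZMod 3))

def δAut : MulAut M := toMul' δadd

lemma δAut_sq : δAut ^ 2 = 1 := by
  refine MulEquiv.ext fun m => ?_
  revert m; decide

def φδ : C2 →* MulAut M := powHom δAut δAut_sq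

def φtriv : C2 →* MulAut M := powHom 1 (one_pow 2)

instance : Fintype (SemidirectProduct M C2 φδ) :=
  Fintype.ofEquiv (M × C2)
    ⟨fun p => ⟨p.1, p.2⟩, fun x => (x.left, x.right), fun _ => rfl, fun _ => rfl⟩

instance : DecidableEq (SemidirectProduct M C2 φδ) := fun a b =>
  decidable_of_iff (a.left = b.left ∧ a.right = b.right)
    (by constructor
        · rintro ⟨h1, h2⟩; cases a; cases b; simp_all
        · rintro rfl; exact ⟨rfl, rfl⟩)

instance : Fintype (SemidirectProduct M C2 φtriv) :=
  Fintype.ofEquiv (M × C2)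
    ⟨fun p => ⟨p.1, p.2⟩, fun x => (x.left, x.right), fun _ => rfl, fun _ => rfl⟩

instance : DecidableEq (SemidirectProduct M C2 φtriv) := fun a b =>
  decidable_of_iff (a.left = b.left ∧ a.right = b.right)
    (by constructor
        · rintro ⟨h1, h2⟩; cases a; cases b; simp_all
        · rintro rfl; exact ⟨rfl, rfl⟩)

def dmap : SemidirectProduct M C2 φδ → Equiv.Perm (Fin 3) × Multiplicative (ZMod 3) :=
  fun x => ((finRotate 3) ^ ((Multiplicative.toAdd x.left).2.val)
      * (Equiv.swap 0 1) ^ ((Multiplicative.toAdd x.right).val),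
    Multiplicative.ofAdd (Multiplicative.toAdd x.left).1)

lemma dmap_mul : ∀ x y, dmap (x * y) = dmap x * dmap y := by decide

lemma dmap_bij : Function.Bijective dmap := by
  constructor
  · show ∀ x y, dmap x = dmap y → x = y
    decide
  · show ∀ p, ∃ x, dmap x = p
    decide

noncomputable def dihedralEquiv :
    SemidirectProduct M C2 φδ ≃* Equiv.Perm (Fin 3) × Multiplicative (ZMod 3) :=
  MulEquiv.ofBijective
    ({ toFun := dmap, map_one' := by decide, map_mul' := dmap_mul } :
      SemidirectProduct M C2 φδ →* Equiv.Perm (Fin 3) × Multiplicative (ZMod 3)) dmap_bij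

def tmap : SemidirectProduct M C2 φtriv → Multiplicative ((ZMod 3 × ZMod 3) × ZMod 2) :=
  fun x => Multiplicative.ofAdd (Multiplicative.toAdd x.left, Multiplicative.toAdd x.right)

lemma tmap_mul : ∀ x y, tmap (x * y) = tmap x * tmap y := by decide

lemma tmap_bij : Function.Bijective tmap := by
  constructor
  · show ∀ x y, tmap x = tmap y → x = y
    decide
  · show ∀ p, ∃ x, tmap x = p
    decide

noncomputable def trivEquiv :
    SemidirectProduct M C2 φtriv ≃* Multiplicative ((ZMod 3 × ZMod 3) × ZMod 2) :=
  MulEquiv.ofBijective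
    ({ toFun := tmap, map_one' := by decide, map_mul' := tmap_mul } :
      SemidirectProduct M C2 φtriv →* Multiplicative ((ZMod 3 × ZMod 3) × ZMod 2)) tmap_bij

lemma invAction_eq : ∀ (c : C2) (m : M),
    (invAut ^ (Multiplicative.toAdd c).val) m = invAction c m := by decide +kernel

/-- Linear-algebra step: an involution of `V` which is neither the identity nor
minus the identity is conjugate to `(x, y) ↦ (x, -y)`. -/
lemma exists_gamma (A : V ≃+ V) (hA2 : ∀ v, A (A v) = v)
    (h1 : ∃ v, A v ≠ v) (hneg : ∃ v, A v ≠ -v) :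
    ∃ γ : V ≃+ V, ∀ v, γ (A v) = δadd (γ v) := by
  obtain ⟨v, hv⟩ := h1
  obtain ⟨v', hv'⟩ := hneg
  set u : V := v' + A v' with hu_def
  set w : V := v - A v with hw_def
  have hu : A u = u := by
    rw [hu_def, map_add, hA2, add_comm]
  have hw : A w = -w := by
    rw [hw_def, map_sub, hA2, neg_sub]
  have hu0 : u ≠ 0 := fun h => hv' (by
    have := eq_neg_of_add_eq_zero_right h
    exact this)
  have hw0 : w ≠ 0 := sub_ne_zero.mpr (Ne.symm hv)
  have valrep : ∀ x : ZMod 3, x = ((x.val : ℕ) : ZMod 3) := by decide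
  have key0 : ∀ (x : ZMod 3) (z : V), z ≠ 0 → x • z = 0 → x = 0 := by decide
  have keydouble : ∀ z : V, z + z = 0 → z = 0 := by decide
  have keyA : ∀ (x : ZMod 3) (z : V), A (x • z) = x • A z := by
    intro x z
    calc A (x • z) = A (x.val • z) := by
          rw [← Nat.cast_smul_eq_nsmul (ZMod 3), ← valrep x]
      _ = x.val • A z := map_nsmul A x.val z
      _ = x • A z := by rw [← Nat.cast_smul_eq_nsmul (ZMod 3), ← valrep x]
  have hadd : ∀ p q : V, (p + q).1 • u + (p + q).2 • w
      = (p.1 • u + p.2 • w) + (q.1 • u + q.2 • w) := by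
    intro p q
    show (p.1 + q.1) • u + (p.2 + q.2) • w = _
    rw [add_smul, add_smul]
    abel
  set γ₀ : V →+ V :=
    { toFun := fun p => p.1 • u + p.2 • w
      map_zero' := by simp
      map_add' := hadd } with hγ₀
  have hγ₀app : ∀ p : V, γ₀ p = p.1 • u + p.2 • w := fun p => rfl
  have hγ₀A : ∀ p : V, A (γ₀ p) = p.1 • u - p.2 • w := by
    intro p
    rw [hγ₀app, map_add, keyA, keyA, hu, hw, smul_neg, sub_eq_add_neg]
  have hinj : Function.Injective γ₀ := by
    rw [injective_iff_map_eq_zero]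
    intro p hp
    have h₂ : p.1 • u - p.2 • w = 0 := by rw [← hγ₀A p, hp, map_zero]
    have hx : p.1 • u = 0 := by
      apply keydouble
      have : (p.1 • u + p.2 • w) + (p.1 • u - p.2 • w) = 0 := by
        rw [← hγ₀app p, hp, h₂, add_zero]
      calc p.1 • u + p.1 • u = (p.1 • u + p.2 • w) + (p.1 • u - p.2 • w) := by abel
        _ = 0 := this
    have hy : p.2 • w = 0 := by
      have := hp
      rw [hγ₀app, hx, zero_add] at this
      exact this
    have h1 : p.1 = 0 := key0 _ _ hu0 hx
    have h2 : p.2 = 0 := key0 _ _ hw0 hy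
    exact Prod.ext h1 h2
  have hbij : Function.Bijective γ₀ := (Finite.injective_iff_bijective).mp hinj
  set γ' : V ≃+ V := AddEquiv.ofBijective γ₀ hbij with hγ'
  have hγ'app : ∀ p, γ' p = γ₀ p := fun p => rfl
  have hspec : ∀ p, A (γ' p) = γ' (δadd p) := by
    intro p
    rw [hγ'app, hγ'app, hγ₀A]
    show p.1 • u - p.2 • w = γ₀ (p.1, -p.2)
    rw [hγ₀app, neg_smul, sub_eq_add_neg]
  refine ⟨γ'.symm, fun v₀ => ?_⟩
  have := hspec (γ'.symm v₀)
  rw [AddEquiv.apply_symm_apply] at this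
  rw [this, AddEquiv.symm_apply_apply]

end Stmt10Aux

open Stmt10Aux in
/-- Lemma 3.6(3), group-theoretic step: a group which is an extension of `ℤ/2`
by `ℤ/3 × ℤ/3` is isomorphic to `(ℤ/3 × ℤ/3) × ℤ/2`, to `S₃ × ℤ/3`, or to the
generalized dihedral group `G₁₈`. -/
theorem stmt_10 (G : Type*) [Group G] (N : Subgroup G) [N.Normal]
    (hN : Nonempty (N ≃* Multiplicative (ZMod 3 × ZMod 3)))
    (hQ : Nonempty ((G ⧸ N) ≃* Multiplicative (ZMod 2))) :
    Nonempty (G ≃* Multiplicative ((ZMod 3 × ZMod 3) × ZMod 2)) ∨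
    Nonempty (G ≃* Equiv.Perm (Fin 3) × Multiplicative (ZMod 3)) ∨
    Nonempty (G ≃* G18) := by
  obtain ⟨e⟩ := hN
  obtain ⟨j⟩ := hQ
  have hfinN : Finite N := Finite.of_equiv _ e.toEquiv.symm
  have hfinQ : Finite (G ⧸ N) := Finite.of_equiv _ j.toEquiv.symm
  have hfinG : Finite G :=
    Finite.of_equiv _ (Subgroup.groupEquivQuotientProdSubgroup (s := N)).symm
  have hcardN : Nat.card N = 9 := by
    rw [Nat.card_congr e.toEquiv]; simp [Nat.card_eq_fintype_card]
  have hcardG : Nat.card G = 18 := by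
    have h2 : Nat.card (G ⧸ N) = 2 := by
      rw [Nat.card_congr j.toEquiv]; simp [Nat.card_eq_fintype_card]
    rw [Subgroup.card_eq_card_quotient_mul_card_subgroup (s := N), hcardN, h2]
  -- Cauchy's theorem: find an element of order 2
  letI : Fintype G := Fintype.ofFinite G
  haveI : Fact (Nat.Prime 2) := ⟨by norm_num⟩
  have hdvd : 2 ∣ Fintype.card G := by
    rw [← Nat.card_eq_fintype_card, hcardG]; norm_num
  obtain ⟨t, ht⟩ := exists_prime_orderOf_dvd_card 2 hdvd
  have ht2 : t ^ 2 = 1 := by rw [← ht]; exact pow_orderOf_eq_one t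
  have htN : t ∉ N := by
    intro hmem
    have h1 : orderOf (⟨t, hmem⟩ : N) = 2 := by rw [Subgroup.orderOf_mk]; exact ht
    have h2 : orderOf (⟨t, hmem⟩ : N) ∣ 9 := hcardN ▸ orderOf_dvd_natCard _
    rw [h1] at h2
    norm_num at h2
  -- The involution of M given by conjugation by t
  set σ : N ≃* N := MulAut.conjNormal t with hσ_def
  set β : MulAut M := (e.symm.trans σ).trans e with hβ_def
  have hβσ : ∀ m, β m = e (σ (e.symm m)) := fun _ => rfl
  have htt : t * t = 1 := by rw [← pow_two]; exact ht2
  have hσ2 : ∀ n : N, σ (σ n) = n := by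
    intro n
    apply Subtype.ext
    show ((σ (σ n) : N) : G) = (n : G)
    rw [hσ_def]
    rw [MulAut.conjNormal_apply, MulAut.conjNormal_apply]
    have : t * (t * ↑n * t⁻¹) * t⁻¹ = (t * t) * ↑n * (t * t)⁻¹ := by group
    rw [this, htt]
    simp
  have hβ : β * β = 1 := by
    refine MulEquiv.ext fun m => ?_
    show β (β m) = m
    rw [hβσ, hβσ, MulEquiv.symm_apply_apply, hσ2, MulEquiv.apply_symm_apply]
  have hconj : ∀ m : M, ((e.symm (β m) : N) : G) = t * (e.symm m : N) * t⁻¹ := by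
    intro m
    rw [hβσ, MulEquiv.symm_apply_apply]
    exact MulAut.conjNormal_apply t _
  have Φ := structureEquiv N e j t ht2 htN β hβ hconj
  by_cases hb1 : β = 1
  · left
    refine ⟨Φ.trans ((semidirectCongr _ φtriv (MulEquiv.refl M) ?_).trans trivEquiv)⟩
    intro c m
    rcases c2cases c with hc | hc <;> subst hc
    · rw [action_zero]
      show (1 : MulAut M) m = φtriv (Multiplicative.ofAdd 0) m
      rw [show φtriv (Multiplicative.ofAdd 0) = 1 from powHom_zero _ _]
    · rw [action_one, hb1]
      show (1 : MulAut M) m = φtriv (Multiplicative.ofAdd 1) m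
      rw [show φtriv (Multiplicative.ofAdd 1) = 1 from powHom_one _ _]
  · by_cases hbi : β = invAut
    · right; right
      refine ⟨Φ.trans (semidirectCongr _ invAction (MulEquiv.refl M) ?_)⟩
      intro c m
      show (β ^ (Multiplicative.toAdd c).val) m = invAction c m
      rw [hbi]
      exact invAction_eq c m
    · right; left
      set A : V ≃+ V := toAdd' β with hA_def
      have hAapp : ∀ m : M, β m = Multiplicative.ofAdd (A (Multiplicative.toAdd m)) :=
        fun _ => rfl
      have hA2 : ∀ v, A (A v) = v := by
        intro v
        have : β (β (Multiplicative.ofAdd v)) = Multiplicative.ofAdd v := by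
          rw [← MulAut.mul_apply, hβ]; rfl
        exact congrArg Multiplicative.toAdd this
      have h1 : ∃ v, A v ≠ v := by
        by_contra h
        push_neg at h
        apply hb1
        refine MulEquiv.ext fun m => ?_
        show β m = m
        rw [hAapp, h (Multiplicative.toAdd m)]
        rfl
      have hneg : ∃ v, A v ≠ -v := by
        by_contra h
        push_neg at h
        apply hbi
        refine MulEquiv.ext fun m => ?_
        show β m = m⁻¹
        rw [hAapp, h (Multiplicative.toAdd m)]
        rfl
      obtain ⟨γ, hγ⟩ := exists_gamma A hA2 h1 hneg
      refine ⟨Φ.trans ((semidirectCongr _ φδ (toMul' γ) ?_).trans dihedralEquiv)⟩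
      intro c m
      rcases c2cases c with hc | hc <;> subst hc
      · rw [action_zero]
        show toMul' γ ((1 : MulAut M) m) = φδ (Multiplicative.ofAdd 0) (toMul' γ m)
        rw [show φδ (Multiplicative.ofAdd 0) = 1 from powHom_zero _ _]
        rfl
      · rw [action_one]
        show toMul' γ (β m) = φδ (Multiplicative.ofAdd 1) (toMul' γ m)
        rw [show φδ (Multiplicative.ofAdd 1) = δAut from powHom_one _ _]
        exact congrArg Multiplicative.ofAdd (hγ (Multiplicative.toAdd m))
end
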